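/- Let a > 0 and b ∈ ℝ, and let ρ : [0,∞) → (0,∞) be differentiable with ρ'(t) = a·log ρ(t) + b for all t ≥ 0 and a·log ρ(0) + b > 0. Then ρ is strictly increasing, and there exists a constant c ≥ 1 such that for all t ≥ 1: c⁻¹·(1 + t)·log(1 + t) ≤ ρ(t) ≤ c·(1 + (1 + t)·(log(1 + t))²). -/

import Mathlib

open Set


lemma phi_hasDerivAt (t : ℝ) (ht : 0 < 1 + t) :
    HasDerivAt (fun s : ℝ => (1 + s) * Real.log (1 + s)) (Real.log (1 + t) + 1) t := by
  have h1 : HasDerivAt (fun s : ℝ => 1 + s) 1 t := (hasDerivAt_id t).const_add 1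
  have h2 : HasDerivAt (fun s : ℝ => Real.log (1 + s)) (1 / (1 + t)) t := by
    have := (Real.hasDerivAt_log ht.ne').comp t h1
    simpa [Function.comp_def] using this
  have h3 : HasDerivAt (fun s : ℝ => (1 + s) * Real.log (1 + s))
      (1 * Real.log (1 + t) + (1 + t) * (1 / (1 + t))) t := h1.mul h2
  convert h3 using 1
  field_simp

lemma step1_arith (r0 a b t R : ℝ) (ha : 0 < a) (hr0 : 0 < r0) (ht1 : 1 ≤ t)
    (hL : 0 ≤ Real.log R) (hup : R ≤ r0 + (a * Real.log R + b) * t) :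
    R ≤ (r0 + a + |b| + 1) * t * (1 + Real.log R) := by
  have hb : b ≤ |b| := le_abs_self b
  have habs : (0:ℝ) ≤ |b| := abs_nonneg b
  have ht0 : (0:ℝ) ≤ t := by linarith
  nlinarith [mul_le_mul_of_nonneg_left ht1 hr0.le, mul_nonneg (mul_nonneg hr0.le ht0) hL,
    mul_nonneg ht0 hL, mul_nonneg (mul_nonneg habs ht0) hL, mul_nonneg (mul_nonneg ha.le ht0) hL]

lemma upper_bound_arith (C t R : ℝ) (hC1 : 1 ≤ C) (ht1 : 1 ≤ t) (hR : 0 < R)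
    (hL : 0 < Real.log R) (h1 : R ≤ C * t * (1 + Real.log R)) :
    R ≤ ((C * (1 + 2 * Real.log (2 * C)) + 2 * C * Real.log 2) / Real.log 2 ^ 2) *
      ((1 + t) * Real.log (1 + t) ^ 2) := by
  set L : ℝ := Real.log R with hLdef
  have ht0 : (0:ℝ) < t := by linarith
  have hlog2 : (0:ℝ) < Real.log 2 := Real.log_pos (by norm_num)
  have hlog2C : Real.log 2 ≤ Real.log (2 * C) := Real.log_le_log (by norm_num) (by linarith)
  have hP : Real.log 2 ≤ Real.log (1 + t) := Real.log_le_log (by norm_num) (by linarith)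
  have hPpos : (0:ℝ) < Real.log (1 + t) := lt_of_lt_of_le hlog2 hP
  have hstep2 : Real.exp (L / 2) ≤ 2 * C * t := by
    have e1 : 1 + L ≤ 2 * Real.exp (L / 2) := by
      nlinarith [Real.add_one_le_exp (L / 2)]
    have e2 : Real.exp (L / 2) * Real.exp (L / 2) = R := by
      rw [← Real.exp_add]
      norm_num
      exact Real.exp_log hR
    have e4 : Real.exp (L / 2) * Real.exp (L / 2) ≤ (2 * C * t) * Real.exp (L / 2) := by
      nlinarith [Real.exp_pos (L / 2), mul_pos (mul_pos (by linarith : (0:ℝ) < C) ht0)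
        (Real.exp_pos (L / 2))]
    exact le_of_mul_le_mul_right e4 (Real.exp_pos (L / 2))
  have hstep4 : L ≤ 2 * (Real.log (2 * C) + Real.log t) := by
    have e1 : L / 2 ≤ Real.log (2 * C * t) := by
      rw [← Real.log_exp (L / 2)]
      exact Real.log_le_log (Real.exp_pos _) hstep2
    rw [Real.log_mul (by nlinarith) (by linarith)] at e1
    linarith
  have hCt : (0:ℝ) ≤ C * t := by nlinarith
  have h5 : R ≤ C * t * (1 + 2 * Real.log (2 * C)) + 2 * C * (t * Real.log t) := by
    nlinarith [mul_nonneg hCt (by linarith : (0:ℝ) ≤ 2 * (Real.log (2 * C) + Real.log t) - L)]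
  have hlt : Real.log t ≤ Real.log (1 + t) := Real.log_le_log (by linarith) (by linarith)
  have hlt0 : 0 ≤ Real.log t := Real.log_nonneg ht1
  have hsq : Real.log 2 * Real.log 2 ≤ Real.log (1 + t) * Real.log (1 + t) :=
    mul_le_mul hP hP hlog2.le hPpos.le
  have hq1 : t * Real.log 2 ^ 2 ≤ (1 + t) * Real.log (1 + t) ^ 2 := by
    nlinarith [mul_nonneg ht0.le (sub_nonneg.mpr hsq), hsq]
  have e1 : t * Real.log t ≤ (1 + t) * Real.log (1 + t) :=
    mul_le_mul (by linarith) hlt hlt0 (by linarith)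
  have e2 := mul_le_mul_of_nonneg_right e1 (mul_pos hlog2 hlog2).le
  have e3 : (1 + t) * Real.log (1 + t) * (Real.log 2 * Real.log 2) ≤
      (1 + t) * Real.log (1 + t) ^ 2 * Real.log 2 := by
    nlinarith [mul_nonneg (mul_nonneg (mul_nonneg (by linarith : (0:ℝ) ≤ 1 + t) hPpos.le)
      hlog2.le) (sub_nonneg.mpr hP)]
  have hq2 : t * Real.log t * Real.log 2 ^ 2 ≤ (1 + t) * Real.log (1 + t) ^ 2 * Real.log 2 := by
    nlinarith [e2, e3]
  have hA : (0:ℝ) ≤ C * (1 + 2 * Real.log (2 * C)) :=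
    mul_nonneg (by linarith) (by linarith)
  have hB : (0:ℝ) ≤ 2 * C := by linarith
  have hmul : R * Real.log 2 ^ 2 ≤
      (C * (1 + 2 * Real.log (2 * C)) + 2 * C * Real.log 2) * ((1 + t) * Real.log (1 + t) ^ 2) := by
    nlinarith [mul_le_mul_of_nonneg_right h5 (by positivity : (0:ℝ) ≤ Real.log 2 ^ 2),
      mul_le_mul_of_nonneg_left hq1 hA, mul_le_mul_of_nonneg_left hq2 hB]
  rw [div_mul_eq_mul_div, le_div_iff₀ (by positivity : (0:ℝ) < Real.log 2 ^ 2)]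
  linarith


set_option maxHeartbeats 800000 in
/-- growth of expanding spheres, inequality `ungleichung3` in the
paper. A positive solution of `ρ' = a log ρ + b` with `a > 0` and
`a log ρ(0) + b > 0` is strictly increasing and satisfies
`c⁻¹ (1+t) log(1+t) ≤ ρ(t) ≤ c (1 + (1+t) log²(1+t))` for `t ≥ 1`. -/
theorem stmt_6 (a b : ℝ) (ha : 0 < a) (ρ : ℝ → ℝ)
    (hpos : ∀ t : ℝ, 0 ≤ t → 0 < ρ t)
    (hode : ∀ t : ℝ, 0 ≤ t →
      HasDerivWithinAt ρ (a * Real.log (ρ t) + b) (Set.Ici 0) t)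
    (h0 : 0 < a * Real.log (ρ 0) + b) :
    StrictMonoOn ρ (Set.Ici 0) ∧
      ∃ c : ℝ, 1 ≤ c ∧ ∀ t : ℝ, 1 ≤ t →
        c⁻¹ * (1 + t) * Real.log (1 + t) ≤ ρ t ∧
        ρ t ≤ c * (1 + (1 + t) * (Real.log (1 + t)) ^ 2) := by
  set v : ℝ → ℝ := fun t => a * Real.log (ρ t) + b with hvdef
  have hv0 : 0 < v 0 := h0
  have hcont : ContinuousOn ρ (Ici 0) := fun t ht => (hode t ht).continuousWithinAt
  have hvcont : ContinuousOn v (Ici 0) :=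
    (continuousOn_const.mul (hcont.log fun t ht => (hpos t ht).ne')).add continuousOn_const
  have hderiv : ∀ t : ℝ, 0 < t → HasDerivAt ρ (v t) t := fun t ht =>
    (hode t ht.le).hasDerivAt (Ici_mem_nhds ht)
  clear_value v
  -- v is positive on [0, ∞)
  have hvpos : ∀ t : ℝ, 0 ≤ t → 0 < v t := by
    by_contra h
    push_neg at h
    obtain ⟨T₀, hT₀, hvT₀⟩ := h
    set S : Set ℝ := Ici 0 ∩ v ⁻¹' (Iic 0) with hS
    have hSne : S.Nonempty := ⟨T₀, hT₀, hvT₀⟩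
    have hSbd : BddBelow S := ⟨0, fun x hx => hx.1⟩
    have hScl : IsClosed S := hvcont.preimage_isClosed_of_isClosed isClosed_Ici isClosed_Iic
    have hTmem : sInf S ∈ S := hScl.csInf_mem hSne hSbd
    set T := sInf S with hTdef
    have hT0 : (0:ℝ) ≤ T := hTmem.1
    have hvT : v T ≤ 0 := hTmem.2
    have hTpos : 0 < T := by
      rcases hT0.lt_or_eq with h | h
      · exact h
      · exact absurd (h ▸ hvT) (not_le.mpr hv0)
    have hvlt : ∀ t : ℝ, 0 ≤ t → t < T → 0 < v t := by
      intro t ht htT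
      by_contra hc
      exact absurd (csInf_le hSbd ⟨ht, not_lt.mp hc⟩) (not_le.mpr htT)
    have hmonoT : StrictMonoOn ρ (Icc 0 T) := by
      apply strictMonoOn_of_deriv_pos (convex_Icc 0 T) (hcont.mono fun x hx => hx.1)
      intro x hx
      rw [interior_Icc] at hx
      rw [(hderiv x hx.1).deriv]
      exact hvlt x hx.1.le hx.2
    have hρT : ρ 0 < ρ T := hmonoT ⟨le_rfl, hT0⟩ ⟨hT0, le_rfl⟩ hTpos
    have : v 0 < v T := by
      have := Real.log_lt_log (hpos 0 le_rfl) hρT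
      simp only [hvdef]
      nlinarith
    linarith
  have hρmono : StrictMonoOn ρ (Ici 0) := by
    apply strictMonoOn_of_deriv_pos (convex_Ici 0) hcont
    intro x hx
    rw [interior_Ici] at hx
    rw [(hderiv x hx).deriv]
    exact hvpos x hx.le
  refine ⟨hρmono, ?_⟩
  have hvmono : ∀ s t : ℝ, 0 ≤ s → s ≤ t → v s ≤ v t := by
    intro s t hs hst
    have hρ := hρmono.monotoneOn hs (hs.trans hst) hst
    have hlog := Real.log_le_log (hpos s hs) hρ
    simp only [hvdef]
    nlinarith
  have hdiffOn : DifferentiableOn ℝ ρ (interior (Ici (0:ℝ))) := by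
    rw [interior_Ici]
    exact fun x hx => (hderiv x hx).differentiableAt.differentiableWithinAt
  -- linear lower bound
  have hlin : ∀ t : ℝ, 0 ≤ t → ρ 0 + v 0 * t ≤ ρ t := by
    intro t ht
    have := (convex_Ici 0).mul_sub_le_image_sub_of_le_deriv hcont hdiffOn
      (C := v 0) (fun x hx => by
        rw [interior_Ici] at hx
        rw [(hderiv x hx).deriv]
        exact hvmono 0 x le_rfl hx.le) 0 self_mem_Ici t ht ht
    linarith
  -- upper bound ρ t ≤ ρ 0 + v t * t
  have hupper : ∀ t : ℝ, 0 ≤ t → ρ t ≤ ρ 0 + v t * t := by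
    intro t ht
    have hsub : Icc (0:ℝ) t ⊆ Ici 0 := fun x hx => hx.1
    have := (convex_Icc 0 t).image_sub_le_mul_sub_of_deriv_le (hcont.mono hsub)
      (fun x hx => by
        rw [interior_Icc] at hx
        exact (hderiv x hx.1).differentiableAt.differentiableWithinAt)
      (fun x hx => by
        rw [interior_Icc] at hx
        rw [(hderiv x hx.1).deriv]
        exact hvmono x t hx.1.le hx.2.le) 0 ⟨le_rfl, ht⟩ t ⟨ht, le_rfl⟩ ht
    linarith
  -- lower linear bound with min constant
  set m : ℝ := min (ρ 0) (v 0) with hmdef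
  have hm : 0 < m := lt_min (hpos 0 le_rfl) hv0
  have hm1 : m ≤ ρ 0 := min_le_left _ _
  have hm2 : m ≤ v 0 := min_le_right _ _
  clear_value m
  have hlow2 : ∀ t : ℝ, 0 ≤ t → m * (1 + t) ≤ ρ t := by
    intro t ht
    have h1 := hlin t ht
    nlinarith [hm1, hm2]
  have hvlow : ∀ t : ℝ, 0 ≤ t → a * Real.log m + a * Real.log (1 + t) + b ≤ v t := by
    intro t ht
    have h1 : (0:ℝ) < 1 + t := by linarith
    have h2 : Real.log (m * (1 + t)) ≤ Real.log (ρ t) :=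
      Real.log_le_log (by positivity) (hlow2 t ht)
    rw [Real.log_mul hm.ne' h1.ne'] at h2
    simp only [hvdef]
    nlinarith
  set T : ℝ := max 1 (Real.exp ((a / 2 - a * Real.log m - b) * (2 / a)) - 1) with hTdef
  have hT1 : (1:ℝ) ≤ T := le_max_left _ _
  have hT0 : (0:ℝ) ≤ T := by linarith
  have hTkey : a / 2 - a * Real.log m - b ≤ a / 2 * Real.log (1 + T) := by
    have h1 : Real.exp ((a / 2 - a * Real.log m - b) * (2 / a)) - 1 ≤ T := le_max_right _ _
    have h3 : (a / 2 - a * Real.log m - b) * (2 / a) ≤ Real.log (1 + T) := by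
      rw [← Real.log_exp ((a / 2 - a * Real.log m - b) * (2 / a))]
      exact Real.log_le_log (Real.exp_pos _) (by linarith)
    have h4 : a / 2 * ((a / 2 - a * Real.log m - b) * (2 / a)) ≤ a / 2 * Real.log (1 + T) :=
      mul_le_mul_of_nonneg_left h3 (by linarith)
    calc a / 2 - a * Real.log m - b
        = a / 2 * ((a / 2 - a * Real.log m - b) * (2 / a)) := by field_simp
      _ ≤ a / 2 * Real.log (1 + T) := h4
  have hlog2 : (0:ℝ) < Real.log 2 := Real.log_pos (by norm_num)
  have hlogT : Real.log 2 ≤ Real.log (1 + T) := Real.log_le_log (by norm_num) (by linarith)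
  have hDpos : (0:ℝ) < (1 + T) * Real.log (1 + T) := by nlinarith
  clear_value T
  set ε : ℝ := min (a / 2)
      (min (ρ T / ((1 + T) * Real.log (1 + T))) (ρ 1 / ((1 + T) * Real.log (1 + T)))) with hεdef
  have hε : 0 < ε := lt_min (by linarith)
    (lt_min (div_pos (hpos T hT0) hDpos) (div_pos (hpos 1 one_pos.le) hDpos))
  have hεa : ε ≤ a / 2 := min_le_left _ _
  have hεT : ε ≤ ρ T / ((1 + T) * Real.log (1 + T)) :=
    le_trans (min_le_right _ _) (min_le_left _ _)
  have hε1 : ε ≤ ρ 1 / ((1 + T) * Real.log (1 + T)) :=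
    le_trans (min_le_right _ _) (min_le_right _ _)
  clear_value ε
  have hεafterT : ∀ t : ℝ, T ≤ t → ε * ((1 + t) * Real.log (1 + t)) ≤ ρ t := by
    intro t ht
    set g : ℝ → ℝ := fun s => ρ s - ε * ((1 + s) * Real.log (1 + s)) with hgdef
    have hgderiv : ∀ s : ℝ, 0 < s → HasDerivAt g (v s - ε * (Real.log (1 + s) + 1)) s :=
      fun s hs => (hderiv s hs).sub ((phi_hasDerivAt s (by linarith)).const_mul ε)
    have hgmono : MonotoneOn g (Ici T) := by
      apply monotoneOn_of_deriv_nonneg (convex_Ici T)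
      · intro s hs
        have hs' : T ≤ s := hs
        exact ((hgderiv s (by linarith)).continuousAt).continuousWithinAt
      · rw [interior_Ici]
        intro s hs
        have hs' : T < s := hs
        exact (hgderiv s (by linarith)).differentiableAt.differentiableWithinAt
      · rw [interior_Ici]
        intro s hs
        have hsT : T < s := hs
        have hs0 : (0:ℝ) < s := by linarith
        rw [(hgderiv s hs0).deriv]
        have h1 := hvlow s hs0.le
        have h2 : Real.log (1 + T) ≤ Real.log (1 + s) :=
          Real.log_le_log (by linarith) (by linarith)
        have h3 : 0 ≤ Real.log (1 + s) := by linarith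
        nlinarith [mul_nonneg (by linarith : (0:ℝ) ≤ a / 2 - ε)
            (by linarith : (0:ℝ) ≤ Real.log (1 + s) + 1),
          mul_nonneg (by linarith : (0:ℝ) ≤ a / 2)
            (by linarith : (0:ℝ) ≤ Real.log (1 + s) - Real.log (1 + T))]
    have h4 : g T ≤ g t := hgmono self_mem_Ici ht ht
    have h5 : (0:ℝ) ≤ g T := by
      have := (le_div_iff₀ hDpos).mp hεT
      simp only [hgdef]
      linarith
    simp only [hgdef] at h4 h5
    linarith
  -- upper bound constants
  set C : ℝ := ρ 0 + a + |b| + 1 with hCdef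
  have hρ0 : 0 < ρ 0 := hpos 0 le_rfl
  have habs : (0:ℝ) ≤ |b| := abs_nonneg b
  have hC1 : (1:ℝ) ≤ C := by nlinarith
  clear_value C
  have hlog2C : Real.log 2 ≤ Real.log (2 * C) := Real.log_le_log (by norm_num) (by nlinarith)
  set M : ℝ := C * (1 + 2 * Real.log (2 * C)) + 2 * C * Real.log 2 with hMdef
  have hM : 0 < M := by nlinarith
  clear_value M
  set K : ℝ := M / Real.log 2 ^ 2 with hKdef
  have hK : 0 < K := by positivity
  set c : ℝ := max (max 1 K) ε⁻¹ with hcdef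
  have hc1 : (1:ℝ) ≤ c := le_trans (le_max_left 1 K) (le_max_left _ _)
  have hKc : K ≤ c := le_trans (le_max_right 1 K) (le_max_left _ _)
  have hεc : ε⁻¹ ≤ c := le_max_right _ _
  clear_value c
  refine ⟨c, hc1, ?_⟩
  intro t ht1
  have ht0 : (0:ℝ) ≤ t := by linarith
  have hP : Real.log 2 ≤ Real.log (1 + t) := Real.log_le_log (by norm_num) (by linarith)
  have hPpos : 0 < Real.log (1 + t) := lt_of_lt_of_le hlog2 hP
  have hX : (0:ℝ) ≤ (1 + t) * Real.log (1 + t) ^ 2 := by positivity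
  constructor
  · -- lower bound
    have hcinv : c⁻¹ ≤ ε := by
      have h2 : (0:ℝ) < ε⁻¹ := by positivity
      calc c⁻¹ ≤ (ε⁻¹)⁻¹ := by
            apply inv_anti₀ h2 hεc
        _ = ε := inv_inv ε
    have hmain : ε * ((1 + t) * Real.log (1 + t)) ≤ ρ t := by
      rcases le_total T t with h | h
      · exact hεafterT t h
      · have h1 : ρ 1 ≤ ρ t := hρmono.monotoneOn (by norm_num) (by exact ht0) ht1
        have h2 := (le_div_iff₀ hDpos).mp hε1
        have hlogtT : Real.log (1 + t) ≤ Real.log (1 + T) :=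
          Real.log_le_log (by linarith) (by linarith)
        have h3 : (1 + t) * Real.log (1 + t) ≤ (1 + T) * Real.log (1 + T) := by nlinarith
        nlinarith
    have : c⁻¹ * ((1 + t) * Real.log (1 + t)) ≤ ε * ((1 + t) * Real.log (1 + t)) :=
      mul_le_mul_of_nonneg_right hcinv (by positivity)
    calc c⁻¹ * (1 + t) * Real.log (1 + t) = c⁻¹ * ((1 + t) * Real.log (1 + t)) := by ring
      _ ≤ ε * ((1 + t) * Real.log (1 + t)) := this
      _ ≤ ρ t := hmain
  · -- upper bound
    have hρt := hpos t ht0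
    have hup := hupper t ht0
    simp only [hvdef] at hup
    rcases le_or_gt (Real.log (ρ t)) 0 with hL | hL
    · have hρ1 : ρ t ≤ 1 := by
        calc ρ t = Real.exp (Real.log (ρ t)) := (Real.exp_log hρt).symm
          _ ≤ Real.exp 0 := Real.exp_le_exp.mpr hL
          _ = 1 := Real.exp_zero
      nlinarith [mul_nonneg (by linarith : (0:ℝ) ≤ c) hX]
    · have hstep1 : ρ t ≤ C * t * (1 + Real.log (ρ t)) := by
        rw [hCdef]
        exact step1_arith (ρ 0) a b t (ρ t) ha hρ0 ht1 hL.le hup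
      have h7 := upper_bound_arith C t (ρ t) hC1 ht1 hρt hL hstep1
      rw [← hMdef, ← hKdef] at h7
      nlinarith [mul_le_mul_of_nonneg_right hKc hX, h7, hX, hc1]
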